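/- Given continuous functions g_1,...,g_m : ℝ → ℝ and a real random variable X such that E[g_k(X)] exists for each k, there exist at most m+1 points z_1,...,z_{m+1} ∈ ℝ and nonnegative weights θ_1,...,θ_{m+1} summing to 1 such that E[g_k(X)] = Σ_{i=1}^{m+1} θ_i g_k(z_i) for every k = 1,...,m. -/

import Mathlib

open MeasureTheory

/-- A convex set with nonempty interior is contained (up to closure) in the closure of its
interior. -/
lemma convex_closure_subset_closure_interior {E : Type*} [NormedAddCommGroup E]
    [NormedSpace ℝ E] {s : Set E} (hs : Convex ℝ s) (h : (interior s).Nonempty) :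
    closure s ⊆ closure (interior s) := by
  obtain ⟨a, ha⟩ := h
  intro x hx
  have hupos : ∀ n : ℕ, (0:ℝ) < 1 / ((n : ℝ) + 1) := fun n => by positivity
  have hule : ∀ n : ℕ, (1 / ((n : ℝ) + 1)) ≤ 1 := fun n => by
    rw [div_le_one (by positivity)]
    linarith [Nat.cast_nonneg (α := ℝ) n]
  have hc : ∀ n : ℕ, (1 / ((n : ℝ) + 1)) • a + (1 - 1 / ((n : ℝ) + 1)) • x ∈ interior s :=
    fun n => hs.combo_interior_closure_mem_interior ha hx (hupos n)
      (by linarith [hule n]) (by ring)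
  have h0 : Filter.Tendsto (fun n : ℕ => 1 / ((n : ℝ) + 1)) Filter.atTop (nhds 0) :=
    tendsto_one_div_add_atTop_nhds_zero_nat
  have htd : Filter.Tendsto
      (fun n : ℕ => (1 / ((n : ℝ) + 1)) • a + (1 - 1 / ((n : ℝ) + 1)) • x)
      Filter.atTop (nhds x) := by
    have h1 : Filter.Tendsto (fun n : ℕ => 1 - 1 / ((n : ℝ) + 1)) Filter.atTop (nhds 1) := by
      have := (tendsto_const_nhds (x := (1:ℝ)) (f := Filter.atTop (α := ℕ))).sub h0
      simpa using this
    have := (h0.smul_const a).add (h1.smul_const x)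
    simpa using this
  exact mem_closure_of_tendsto htd (Filter.Eventually.of_forall hc)

/-- Padding a finite convex combination supported on at most `N` points to exactly `N` points. -/
lemma pad_combination {N : ℕ} {ι : Type*} [Fintype ι] (hcard : Fintype.card ι ≤ N)
    (w : ι → ℝ) (x : ι → ℝ) (T : Set ℝ) (hx : ∀ i, x i ∈ T) (x₀ : ℝ) (hx₀ : x₀ ∈ T)
    (hw : ∀ i, 0 ≤ w i) (hsum : ∑ i, w i = 1) :
    ∃ (y : Fin N → ℝ) (θ : Fin N → ℝ), (∀ j, y j ∈ T) ∧ (∀ j, 0 ≤ θ j) ∧ (∑ j, θ j = 1) ∧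
      ∀ φ : ℝ → ℝ, ∑ j, θ j * φ (y j) = ∑ i, w i * φ (x i) := by
  classical
  obtain ⟨e⟩ : Nonempty (ι ↪ Fin N) :=
    Function.Embedding.nonempty_of_card_le (by simpa using hcard)
  refine ⟨Function.extend e x fun _ => x₀, Function.extend e w fun _ => 0, ?_, ?_, ?_, ?_⟩
  · intro j
    rcases em (∃ i, e i = j) with ⟨i, rfl⟩ | hj
    · rw [Function.Injective.extend_apply e.injective]; exact hx i
    · rw [Function.extend_apply' _ _ _ hj]; exact hx₀
  · intro j
    rcases em (∃ i, e i = j) with ⟨i, rfl⟩ | hj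
    · rw [Function.Injective.extend_apply e.injective]; exact hw i
    · rw [Function.extend_apply' _ _ _ hj]
  · have key : ∀ φ : ℝ → ℝ,
        ∑ j, Function.extend e w (fun _ => 0) j * φ (Function.extend e x (fun _ => x₀) j)
          = ∑ i, w i * φ (x i) := by
      intro φ
      rw [← Finset.sum_subset (Finset.subset_univ (Finset.univ.image e))]
      · rw [Finset.sum_image (fun i _ i' _ h => e.injective h)]
        refine Finset.sum_congr rfl fun i _ => ?_
        rw [Function.Injective.extend_apply e.injective,
          Function.Injective.extend_apply e.injective]
      · intro j _ hj
        have hj' : ¬∃ i, e i = j := by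
          rintro ⟨i, rfl⟩
          exact hj (Finset.mem_image_of_mem e (Finset.mem_univ i))
        rw [Function.extend_apply' _ _ _ hj', zero_mul]
    simpa [hsum] using key fun _ => 1
  · intro φ
    rw [← Finset.sum_subset (Finset.subset_univ (Finset.univ.image e))]
    · rw [Finset.sum_image (fun i _ i' _ h => e.injective h)]
      refine Finset.sum_congr rfl fun i _ => ?_
      rw [Function.Injective.extend_apply e.injective,
        Function.Injective.extend_apply e.injective]
    · intro j _ hj
      have hj' : ¬∃ i, e i = j := by
        rintro ⟨i, rfl⟩
        exact hj (Finset.mem_image_of_mem e (Finset.mem_univ i))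
      rw [Function.extend_apply' _ _ _ hj', zero_mul]

/-- Inductive core: sigma points can be found inside any closed set carrying the law of `X`. -/
lemma sigma_points_aux (m : ℕ) {Ω : Type*} [MeasurableSpace Ω] (μ : Measure Ω)
    [IsProbabilityMeasure μ] (X : Ω → ℝ) (hX : Measurable X) :
    ∀ (g : Fin m → ℝ → ℝ), (∀ k, Continuous (g k)) →
    (∀ k, Integrable (fun ω => g k (X ω)) μ) →
    ∀ (T : Set ℝ), IsClosed T → (∀ᵐ ω ∂μ, X ω ∈ T) →
    ∃ (z θ : Fin (m + 1) → ℝ), (∀ i, z i ∈ T) ∧ (∀ i, 0 ≤ θ i) ∧ (∑ i, θ i = 1) ∧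
      ∀ k, ∫ ω, g k (X ω) ∂μ = ∑ i, θ i * g k (z i) := by
  induction m with
  | zero =>
    intro g _ _ T _ hXT
    have hne : ∃ ω, X ω ∈ T := by
      have : (Filter.NeBot (ae μ)) := ae_neBot.mpr (IsProbabilityMeasure.ne_zero μ)
      exact hXT.exists
    obtain ⟨ω₀, hω₀⟩ := hne
    exact ⟨fun _ => X ω₀, fun _ => 1, fun _ => hω₀, fun _ => zero_le_one, by simp,
      fun k => k.elim0⟩
  | succ m ih =>
    intro g hg hint T hT hXT
    classical
    set G : ℝ → (Fin (m + 1) → ℝ) := fun x k => g k x with hGdef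
    have hGc : Continuous G := continuous_pi fun k => hg k
    have hTne : ∃ x₀, x₀ ∈ T := by
      have : (Filter.NeBot (ae μ)) := ae_neBot.mpr (IsProbabilityMeasure.ne_zero μ)
      obtain ⟨ω₀, hω₀⟩ := hXT.exists
      exact ⟨X ω₀, hω₀⟩
    obtain ⟨x₀, hx₀⟩ := hTne
    set S : Set (Fin (m + 1) → ℝ) := G '' T with hSdef
    set C : Set (Fin (m + 1) → ℝ) := convexHull ℝ S with hCdef
    have hCconv : Convex ℝ C := convex_convexHull ℝ S
    have hGXm : AEStronglyMeasurable (fun ω => G (X ω)) μ :=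
      (hGc.measurable.comp hX).aestronglyMeasurable
    have hGXint : Integrable (fun ω => G (X ω)) μ := by
      refine Integrable.mono' (g := fun ω => ∑ k, |g k (X ω)|)
        (integrable_finset_sum _ fun k _ => (hint k).abs) hGXm ?_
      refine Filter.Eventually.of_forall fun ω => ?_
      rw [pi_norm_le_iff_of_nonneg (by positivity)]
      intro k
      calc ‖G (X ω) k‖ = |g k (X ω)| := rfl
        _ ≤ ∑ k, |g k (X ω)| :=
          Finset.single_le_sum (f := fun j => |g j (X ω)|) (fun j _ => abs_nonneg _)
            (Finset.mem_univ k)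
    set b : Fin (m + 1) → ℝ := ∫ ω, G (X ω) ∂μ with hb
    have hbk : ∀ k, b k = ∫ ω, g k (X ω) ∂μ := by
      intro k
      have h := ContinuousLinearMap.integral_comp_comm
        (ContinuousLinearMap.proj (R := ℝ) (φ := fun _ : Fin (m + 1) => ℝ) k) hGXint
      exact h.symm
    have hmemS : ∀ᵐ ω ∂μ, G (X ω) ∈ S := hXT.mono fun ω h => ⟨X ω, h, rfl⟩
    have hbclos : b ∈ closure C := by
      refine hCconv.closure.integral_mem isClosed_closure ?_ hGXint
      exact hmemS.mono fun ω h => subset_closure (subset_convexHull ℝ S h)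
    by_cases hbC : b ∈ C
    · -- Carathéodory
      obtain ⟨ι, hι, p, w, hpS, hai, hwpos, hwsum, hwp⟩ :=
        eq_pos_convex_span_of_mem_convexHull hbC
      have hιne : Nonempty ι := by
        by_contra h
        rw [not_nonempty_iff] at h
        rw [Finset.univ_eq_empty, Finset.sum_empty] at hwsum
        exact one_ne_zero hwsum.symm
      have hcard : Fintype.card ι ≤ m + 2 := by
        have h1 := hai.finrank_vectorSpan_add_one
        have h2 : Module.finrank ℝ (vectorSpan ℝ (Set.range p)) ≤ m + 1 := by
          have := Submodule.finrank_le (vectorSpan ℝ (Set.range p))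
          simpa [Module.finrank_fin_fun] using this
        omega
      choose x hxT hxG using fun i => hpS (Set.mem_range_self i)
      obtain ⟨y, θ, hyT, hθ0, hθ1, hkey⟩ :=
        pad_combination hcard w x T hxT x₀ hx₀ (fun i => (hwpos i).le) hwsum
      refine ⟨y, θ, hyT, hθ0, hθ1, fun k => ?_⟩
      have hbk' : b k = ∑ i, w i * g k (x i) := by
        rw [← hwp]
        rw [Finset.sum_apply]
        refine Finset.sum_congr rfl fun i _ => ?_
        rw [Pi.smul_apply, smul_eq_mul, ← hxG i]
      rw [← hbk k, hbk', hkey (g k)]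
    · -- separation
      have hLex : ∃ L : (Fin (m + 1) → ℝ) →L[ℝ] ℝ, L ≠ 0 ∧
          (∀ᵐ ω ∂μ, L (G (X ω)) = L b) := by
        by_cases hintr : (interior C).Nonempty
        · obtain ⟨L, hL⟩ := geometric_hahn_banach_open_point hCconv.interior isOpen_interior
            (fun h => hbC (interior_subset h))
          have hle : ∀ y ∈ C, L y ≤ L b := by
            intro y hy
            have h1 : C ⊆ closure (interior C) :=
              subset_closure.trans (convex_closure_subset_closure_interior hCconv hintr)
            have h2 : closure (interior C) ⊆ {v | L v ≤ L b} :=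
              closure_minimal (fun v hv => (hL v hv).le)
                (isClosed_le L.continuous continuous_const)
            exact h2 (h1 hy)
          have hLne : L ≠ 0 := by
            obtain ⟨a, ha⟩ := hintr
            intro h
            have := hL a ha
            rw [h] at this
            simp at this
          have hint' : Integrable (fun ω => L (G (X ω))) μ := L.integrable_comp hGXint
          have hI : ∫ ω, L (G (X ω)) ∂μ = L b := L.integral_comp_comm hGXint
          have hle' : ∀ᵐ ω ∂μ, L (G (X ω)) ≤ L b :=
            hmemS.mono fun ω h => hle _ (subset_convexHull ℝ S h)
          have h0 : ∫ ω, (L b - L (G (X ω))) ∂μ = 0 := by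
            rw [integral_sub (integrable_const _) hint', integral_const]
            simp [hI]
          have hz := (integral_eq_zero_iff_of_nonneg_ae
            (hle'.mono fun ω h => sub_nonneg.mpr h)
            ((integrable_const _).sub hint')).mp h0
          refine ⟨L, hLne, hz.mono fun ω h => ?_⟩
          have h' : L b - L (G (X ω)) = 0 := h
          linarith
        · have hCmem : G x₀ ∈ C := subset_convexHull ℝ S ⟨x₀, hx₀, rfl⟩
          have hspan : affineSpan ℝ C ≠ ⊤ := by
            intro h
            exact hintr (hCconv.interior_nonempty_iff_affineSpan_eq_top.mpr h)
          have hdir : (affineSpan ℝ C).direction < ⊤ := by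
            rcases lt_or_eq_of_le (le_top (a := (affineSpan ℝ C).direction)) with h | h
            · exact h
            · exact absurd ((AffineSubspace.direction_eq_top_iff_of_nonempty
                ⟨G x₀, subset_affineSpan ℝ C hCmem⟩).mp h) hspan
          obtain ⟨f, hf0, hfmap⟩ :=
            Submodule.exists_dual_map_eq_bot_of_lt_top hdir inferInstance
          have hker : ∀ v ∈ (affineSpan ℝ C).direction, f v = 0 := by
            intro v hv
            have : f v ∈ Submodule.map f (affineSpan ℝ C).direction :=
              Submodule.mem_map_of_mem hv
            rw [hfmap] at this
            simpa using this
          set L : (Fin (m + 1) → ℝ) →L[ℝ] ℝ := LinearMap.toContinuousLinearMap f with hLdef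
          have hconst : ∀ y ∈ C, L y = L (G x₀) := by
            intro y hy
            have hmem : y - G x₀ ∈ (affineSpan ℝ C).direction := by
              have := AffineSubspace.vsub_mem_direction (subset_affineSpan ℝ C hy)
                (subset_affineSpan ℝ C hCmem)
              simpa using this
            have h0 : f (y - G x₀) = 0 := hker _ hmem
            have : f y - f (G x₀) = 0 := by rw [← map_sub]; exact h0
            have hLy : L y = f y := rfl
            have hLx : L (G x₀) = f (G x₀) := rfl
            rw [hLy, hLx]
            linarith
          have hLb : L b = L (G x₀) := by
            have hcl : closure C ⊆ {v | L v = L (G x₀)} :=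
              closure_minimal hconst (isClosed_eq L.continuous continuous_const)
            exact hcl hbclos
          refine ⟨L, ?_, ?_⟩
          · intro h
            apply hf0
            refine LinearMap.ext fun v => ?_
            have hv : L v = 0 := by rw [h]; rfl
            exact hv
          · refine hmemS.mono fun ω h => ?_
            rw [hconst _ (subset_convexHull ℝ S h), hLb]
      obtain ⟨L, hL0, hae⟩ := hLex
      set c : Fin (m + 1) → ℝ := fun k => L (Pi.single k (1:ℝ) : Fin (m + 1) → ℝ) with hcdef
      have hLy : ∀ y : Fin (m + 1) → ℝ, L y = ∑ k, y k * c k := by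
        intro y
        have hrep : y = ∑ i, y i • (Pi.single i (1 : ℝ) : Fin (m + 1) → ℝ) := by
          funext j
          rw [Finset.sum_apply]
          simp [Pi.single_apply]
        calc L y = L (∑ i, y i • (Pi.single i (1 : ℝ) : Fin (m + 1) → ℝ)) := by
              rw [← hrep]
          _ = ∑ i, y i * c i := by
            rw [map_sum]
            refine Finset.sum_congr rfl fun i _ => ?_
            rw [L.map_smul, smul_eq_mul]
      have hck : ∃ k0, c k0 ≠ 0 := by
        by_contra h
        push_neg at h
        apply hL0
        ext y
        rw [ContinuousLinearMap.zero_apply, hLy]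
        simp [h]
      obtain ⟨k0, hk0⟩ := hck
      set T' : Set ℝ := T ∩ {x | L (G x) = L b} with hT'def
      have hT'c : IsClosed T' :=
        hT.inter (isClosed_eq (L.continuous.comp hGc) continuous_const)
      have hXT' : ∀ᵐ ω ∂μ, X ω ∈ T' := (hXT.and hae).mono fun ω h => ⟨h.1, h.2⟩
      obtain ⟨z, θ, hzT', hθ0, hθ1, hmom⟩ := ih (fun j => g (k0.succAbove j))
        (fun j => hg _) (fun j => hint _) T' hT'c hXT'
      have hfin : ∀ k, ∫ ω, g k (X ω) ∂μ = ∑ i, θ i * g k (z i) := by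
        intro k
        by_cases hk : k = k0
        · rw [hk]
          set I : Fin (m + 1) → ℝ := fun k' => ∫ ω, g k' (X ω) ∂μ with hIdef
          set M : Fin (m + 1) → ℝ := fun k' => ∑ i, θ i * g k' (z i) with hMdef
          have hA : ∀ x ∈ T', ∑ k', g k' x * c k' = L b := by
            intro x hx
            have : L (G x) = ∑ k', (G x) k' * c k' := hLy (G x)
            rw [← this]
            exact hx.2
          have hB : ∑ k', I k' * c k' = L b := by
            have h1 : ∫ ω, L (G (X ω)) ∂μ = L b := L.integral_comp_comm hGXint
            have h2 : ∫ ω, L (G (X ω)) ∂μ = ∑ k', I k' * c k' := by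
              have : ∀ ω, L (G (X ω)) = ∑ k', g k' (X ω) * c k' := fun ω => hLy (G (X ω))
              rw [integral_congr_ae (Filter.Eventually.of_forall this),
                integral_finset_sum _ fun k' _ => (hint k').mul_const (c k')]
              refine Finset.sum_congr rfl fun k' _ => ?_
              rw [integral_mul_const]
            rw [← h2, h1]
          have hC2 : ∑ k', M k' * c k' = L b := by
            have hswap : ∑ k', M k' * c k' = ∑ i, θ i * ∑ k', g k' (z i) * c k' := by
              simp_rw [hMdef, Finset.sum_mul, Finset.mul_sum]
              rw [Finset.sum_comm]
              exact Finset.sum_congr rfl fun i _ => Finset.sum_congr rfl fun k' _ => by ring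
            rw [hswap]
            have : ∀ i : Fin (m + 1), θ i * ∑ k', g k' (z i) * c k' = θ i * L b := by
              intro i
              rw [hA (z i) (hzT' i)]
            rw [Finset.sum_congr rfl fun i _ => this i, ← Finset.sum_mul, hθ1, one_mul]
          have hIM : ∀ j : Fin m, I (k0.succAbove j) = M (k0.succAbove j) := fun j => hmom j
          have hsplitI := Fin.sum_univ_succAbove (fun k' => I k' * c k') k0
          have hsplitM := Fin.sum_univ_succAbove (fun k' => M k' * c k') k0
          rw [hsplitI] at hB
          rw [hsplitM] at hC2
          have hsum_eq : ∑ j, I (k0.succAbove j) * c (k0.succAbove j)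
              = ∑ j, M (k0.succAbove j) * c (k0.succAbove j) :=
            Finset.sum_congr rfl fun j _ => by rw [hIM j]
          have : I k0 * c k0 = M k0 * c k0 := by
            have := hB.trans hC2.symm
            rw [hsum_eq] at this
            linarith
          exact mul_right_cancel₀ hk0 this
        · obtain ⟨j, rfl⟩ := Fin.exists_succAbove_eq hk
          exact hmom j
      have hpad : ∀ φ : ℝ → ℝ,
          ∑ i, (Fin.snoc θ (0:ℝ) : Fin (m + 2) → ℝ) i * φ ((Fin.snoc z x₀ : Fin (m + 2) → ℝ) i)
            = ∑ i, θ i * φ (z i) := by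
        intro φ
        rw [Fin.sum_univ_castSucc]
        simp
      refine ⟨Fin.snoc z x₀, Fin.snoc θ 0, ?_, ?_, ?_, ?_⟩
      · intro i
        refine Fin.lastCases ?_ (fun j => ?_) i
        · simpa using hx₀
        · simpa using (hzT' j).1
      · intro i
        refine Fin.lastCases ?_ (fun j => ?_) i
        · simp
        · simpa using hθ0 j
      · rw [Fin.sum_univ_castSucc]
        simpa using hθ1
      · intro k
        rw [show ∑ i, (Fin.snoc θ (0:ℝ) : Fin (m + 2) → ℝ) i
            * g k ((Fin.snoc z x₀ : Fin (m + 2) → ℝ) i) = ∑ i, θ i * g k (z i) from hpad (g k)]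
        exact hfin k

/-- Existence of sigma points matching `m` generalized moments. -/
theorem sigma_points_exist
    {Ω : Type*} [MeasurableSpace Ω] (μ : Measure Ω) [IsProbabilityMeasure μ]
    (m : ℕ) (g : Fin m → ℝ → ℝ) (hg : ∀ k, Continuous (g k))
    (X : Ω → ℝ) (hX : Measurable X)
    (hint : ∀ k, Integrable (fun ω => g k (X ω)) μ) :
    ∃ (z : Fin (m + 1) → ℝ) (θ : Fin (m + 1) → ℝ),
      (∀ i, 0 ≤ θ i) ∧ (∑ i, θ i = 1) ∧
      ∀ k, ∫ ω, g k (X ω) ∂μ = ∑ i, θ i * g k (z i) := by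
  obtain ⟨z, θ, _, hθ0, hθ1, hmom⟩ := sigma_points_aux m μ X hX g hg hint Set.univ
    isClosed_univ (Filter.Eventually.of_forall fun _ => Set.mem_univ _)
  exact ⟨z, θ, hθ0, hθ1, hmom⟩
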